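/- Characterization of the symmetrizing weight β = √3: for β > 0 and η ∈ (−1/√3, 1/√3), let M_β(η) be the 2×2 real matrix with rows (a(η), β·η) and (a₂(η)/β, a₁(η)), and let M_β^s(η) = (1/2)(M_β(η) + M_β(η)ᵀ). Then: (i) for every η ∈ (−1/√3, 1/√3) the eigenvalues of M_{√3}^s(η) are μ₊(η) and μ₋(η), where μ±(η) = 1 ± (√3·|η| / (6·(1−η²)²))·(3 − 2η² + 3η⁴), and M_{√3}^s(η) is positive definite (in particular μ₋(η) > 0); (ii) conversely, for every β > 0 with β ≠ √3 there exists η ∈ (−1/√3, 1/√3) such that M_β^s(η) is not positive definite. -/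

import Mathlib

noncomputable section

open Real Filter MeasureTheory Set Matrix
open Topology

/-- The coefficient `a(η) = (1 - 3η²)/(1 - η²)`. -/
def aGL (η : ℝ) : ℝ := (1 - 3 * η ^ 2) / (1 - η ^ 2)

/-- The coefficient `a₁(η) = (1 + η²)/(1 - η²)`. -/
def a1GL (η : ℝ) : ℝ := (1 + η ^ 2) / (1 - η ^ 2)

/-- The coefficient `a₂(η) = -4η³/(1 - η²)²`. -/
def a2GL (η : ℝ) : ℝ := -4 * η ^ 3 / (1 - η ^ 2) ^ 2

/-- The matrix `M_β(η)` with rows `(a(η), βη)` and `(a₂(η)/β, a₁(η))`. -/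
def Mbeta (β η : ℝ) : Matrix (Fin 2) (Fin 2) ℝ :=
  !![aGL η, β * η; a2GL η / β, a1GL η]

/-- The symmetrized matrix `M_β^s(η) = (1/2)(M_β(η) + M_β(η)ᵀ)`. -/
def MbetaS (β η : ℝ) : Matrix (Fin 2) (Fin 2) ℝ :=
  (1 / 2 : ℝ) • (Mbeta β η + (Mbeta β η)ᵀ)

/-- The eigenvalues `μ±(η)` of `M_{√3}^s(η)`; `sign = 1` gives `μ₊`, `sign = -1`
gives `μ₋`. -/
def muGL (sign η : ℝ) : ℝ :=
  1 + sign * (Real.sqrt 3 * |η| / (6 * (1 - η ^ 2) ^ 2)) * (3 - 2 * η ^ 2 + 3 * η ^ 4)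

lemma posdef_fin_two {a b c : ℝ} (ha : 0 < a) (hd : 0 < a * c - b ^ 2) :
    (!![a, b; b, c] : Matrix (Fin 2) (Fin 2) ℝ).PosDef := by
  refine Matrix.PosDef.of_dotProduct_mulVec_pos ?_ ?_
  · ext i j
    fin_cases i <;> fin_cases j <;>
      simp [Matrix.IsHermitian, Matrix.conjTranspose, Matrix.vecHead, Matrix.vecTail]
  · intro x hx
    have hx' : x 0 ≠ 0 ∨ x 1 ≠ 0 := by
      by_contra h
      push_neg at h
      apply hx
      ext i; fin_cases i <;> simp [h.1, h.2]
    simp only [star_trivial, Matrix.mulVec, dotProduct, Fin.sum_univ_two]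
    simp [Matrix.cons_val_zero, Matrix.cons_val_one]
    rcases hx' with h | h
    · rcases eq_or_ne (x 1) 0 with h1 | h1
      · simp only [h1, mul_zero, add_zero, zero_mul]
        nlinarith [sq_abs (x 0), pow_pos (abs_pos.mpr h) 2]
      · nlinarith [sq_nonneg (a * x 0 + b * x 1), sq_abs (x 1), pow_pos (abs_pos.mpr h1) 2]
    · nlinarith [sq_nonneg (a * x 0 + b * x 1), sq_abs (x 1), pow_pos (abs_pos.mpr h) 2]

lemma MbetaS_eq (β η : ℝ) :
    MbetaS β η = !![aGL η, (β * η + a2GL η / β) / 2;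
                    (β * η + a2GL η / β) / 2, a1GL η] := by
  ext i j
  fin_cases i <;> fin_cases j <;>
    simp [MbetaS, Mbeta, Matrix.vecHead, Matrix.vecTail] <;> ring

set_option maxHeartbeats 1000000 in
/-- Characterization of the symmetrizing weight `β = √3`: for `β = √3` the
symmetrized matrix has eigenvalues `μ±(η)` and is positive definite on the whole
Eckhaus-stable range, while for any other `β > 0` positive definiteness fails
for some `η`. -/
theorem symmetrizer_characterization :
    (∀ η ∈ Set.Ioo (-(1 / Real.sqrt 3)) (1 / Real.sqrt 3),
      (∀ μ : ℝ, (MbetaS (Real.sqrt 3) η - μ • (1 : Matrix (Fin 2) (Fin 2) ℝ)).det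
          = (muGL 1 η - μ) * (muGL (-1) η - μ)) ∧
      (MbetaS (Real.sqrt 3) η).PosDef ∧
      0 < muGL (-1) η) ∧
    (∀ β > (0:ℝ), β ≠ Real.sqrt 3 →
      ∃ η ∈ Set.Ioo (-(1 / Real.sqrt 3)) (1 / Real.sqrt 3),
        ¬ (MbetaS β η).PosDef) := by
  have hs3 : (Real.sqrt 3) ^ 2 = 3 := Real.sq_sqrt (by norm_num)
  have hs3pos : (0:ℝ) < Real.sqrt 3 := Real.sqrt_pos.mpr (by norm_num)
  have hs3ne : Real.sqrt 3 ≠ 0 := ne_of_gt hs3pos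
  constructor
  · intro η hη
    have hη2 : η ^ 2 < 1 / 3 := by
      have h1 : |η| < 1 / Real.sqrt 3 := by
        rw [abs_lt]; exact ⟨hη.1, hη.2⟩
      have h2 : |η| ^ 2 < (1 / Real.sqrt 3) ^ 2 :=
        pow_lt_pow_left₀ h1 (abs_nonneg η) (by norm_num)
      rw [sq_abs] at h2
      calc η ^ 2 < (1 / Real.sqrt 3) ^ 2 := h2
        _ = 1 / 3 := by rw [div_pow, one_pow, hs3]
    have hdenpos : (0:ℝ) < 1 - η ^ 2 := by nlinarith
    have hden : (1 : ℝ) - η ^ 2 ≠ 0 := ne_of_gt hdenpos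
    set c : ℝ := (Real.sqrt 3 * η + a2GL η / Real.sqrt 3) / 2 with hc
    have hc2 : c ^ 2 = (3 * η + a2GL η) ^ 2 / 12 := by
      rw [hc]
      field_simp
      linear_combination (12 * Real.sqrt 3 ^ 2 * η ^ 2 - 4 * (a2GL η) ^ 2) * hs3
    set T : ℝ := Real.sqrt 3 * |η| / (6 * (1 - η ^ 2) ^ 2) * (3 - 2 * η ^ 2 + 3 * η ^ 4)
      with hT
    have hT2 : T ^ 2 = η ^ 2 * (3 - 2 * η ^ 2 + 3 * η ^ 4) ^ 2 / (12 * (1 - η ^ 2) ^ 4) := by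
      rw [hT, mul_pow, div_pow, mul_pow, hs3, sq_abs]
      field_simp
      ring
    have h3x : (0:ℝ) < 1 - 3 * η ^ 2 := by nlinarith
    have hQ : (0:ℝ) < 3 * η ^ 8 - 7 * η ^ 6 + 21 * η ^ 4 - 21 * η ^ 2 + 12 := by
      nlinarith [sq_nonneg η, sq_nonneg (η ^ 2), sq_nonneg (η ^ 3), sq_nonneg (η ^ 4),
        pow_nonneg (sq_nonneg η) 3]
    refine ⟨?_, ?_, ?_⟩
    · intro μ
      rw [MbetaS_eq, ← hc]
      have hmat : (!![aGL η, c; c, a1GL η] - μ • (1 : Matrix (Fin 2) (Fin 2) ℝ))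
          = !![aGL η - μ, c; c, a1GL η - μ] := by
        ext i j
        fin_cases i <;> fin_cases j <;>
          simp [Matrix.one_apply, Matrix.vecHead, Matrix.vecTail] <;> ring
      rw [hmat, Matrix.det_fin_two_of]
      have hmu : (muGL 1 η - μ) * (muGL (-1) η - μ) = (1 - μ) ^ 2 - T ^ 2 := by
        simp only [muGL]
        rw [hT]
        ring
      rw [hmu, hT2]
      have hcc : c * c = (3 * η + a2GL η) ^ 2 / 12 := by rw [← sq]; exact hc2
      rw [hcc]
      simp only [aGL, a1GL, a2GL]
      field_simp
      ring
    · rw [MbetaS_eq, ← hc]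
      apply posdef_fin_two
      · unfold aGL
        exact div_pos h3x hdenpos
      · have hdetval : aGL η * a1GL η - c ^ 2
            = (12 * (1 - η ^ 2) ^ 2 * (1 - 3 * η ^ 2) * (1 + η ^ 2)
              - (3 * η * (1 - η ^ 2) ^ 2 - 4 * η ^ 3) ^ 2) / (12 * (1 - η ^ 2) ^ 4) := by
          rw [hc2]
          unfold aGL a1GL a2GL
          field_simp
          ring
        rw [hdetval]
        apply div_pos
        · nlinarith [mul_pos h3x hQ]
        · positivity
    · have hmuT : muGL (-1) η = 1 - T := by
        unfold muGL; rw [hT]; ring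
      rw [hmuT]
      have hTnn : 0 ≤ T := by
        rw [hT]
        have h1 : (0:ℝ) < 3 - 2 * η ^ 2 + 3 * η ^ 4 := by nlinarith [sq_nonneg (η ^ 2)]
        positivity
      have hT2lt : T ^ 2 < 1 := by
        rw [hT2, div_lt_one (by positivity)]
        nlinarith [mul_pos h3x hQ]
      nlinarith
  · intro β hβ hβne
    have hβne0 : β ≠ 0 := ne_of_gt hβ
    set η₀ : ℝ := 1 / Real.sqrt 3 with hη₀
    have hη₀pos : 0 < η₀ := by positivity
    have hη₀sq : η₀ ^ 2 = 1 / 3 := by rw [hη₀, div_pow, one_pow, hs3]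
    set F : ℝ → ℝ := fun η => aGL η * a1GL η - ((β * η + a2GL η / β) / 2) ^ 2 with hF
    have hFcont : ContinuousAt F η₀ := by
      have hden : (1:ℝ) - η₀ ^ 2 ≠ 0 := by rw [hη₀sq]; norm_num
      have h1 : ContinuousAt (fun η : ℝ => 1 - η ^ 2) η₀ := by fun_prop
      have ha : ContinuousAt aGL η₀ := by
        unfold aGL; exact ContinuousAt.div (by fun_prop) h1 hden
      have ha1 : ContinuousAt a1GL η₀ := by
        unfold a1GL; exact ContinuousAt.div (by fun_prop) h1 hden
      have ha2 : ContinuousAt a2GL η₀ := by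
        unfold a2GL; exact ContinuousAt.div (by fun_prop) (by fun_prop) (pow_ne_zero 2 hden)
      rw [hF]
      have h5 : ContinuousAt (fun η : ℝ => ((β * η + a2GL η / β) / 2) ^ 2) η₀ := by
        apply ContinuousAt.pow
        apply ContinuousAt.div_const
        exact (continuousAt_const.mul continuousAt_id).add (ha2.div_const β)
      exact (ha.mul ha1).sub h5
    have ha0 : aGL η₀ = 0 := by
      unfold aGL; rw [hη₀sq]; norm_num
    have ha2v : a2GL η₀ = -Real.sqrt 3 := by
      unfold a2GL
      rw [show η₀ ^ 3 = η₀ ^ 2 * η₀ from by ring, hη₀sq, hη₀]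
      field_simp
      linear_combination (4 : ℝ) * hs3
    have hb2 : β ^ 2 ≠ 3 := by
      intro h
      apply hβne
      rw [← Real.sqrt_sq hβ.le, h]
    have hq : (β * η₀ + a2GL η₀ / β) / 2 ≠ 0 := by
      rw [ha2v, hη₀]
      intro h
      apply hb2
      field_simp at h
      nlinarith [hs3, h]
    have hFneg : F η₀ < 0 := by
      have : F η₀ = -(((β * η₀ + a2GL η₀ / β) / 2) ^ 2) := by
        rw [hF]; simp only [ha0]; ring
      rw [this]
      have h0 : 0 < ((β * η₀ + a2GL η₀ / β) / 2) ^ 2 :=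
        (pow_pos (abs_pos.mpr hq) 2).trans_eq (sq_abs _)
      linarith
    have hev : ∀ᶠ η in 𝓝[<] η₀, F η < 0 :=
      (hFcont.tendsto.eventually_lt_const hFneg).filter_mono nhdsWithin_le_nhds
    have hmem : Set.Ioo (-η₀) η₀ ∈ 𝓝[<] η₀ :=
      Ioo_mem_nhdsLT_of_mem ⟨by linarith, le_rfl⟩
    obtain ⟨η, hFη, hηmem⟩ := (hev.and (eventually_of_mem hmem fun x hx => hx)).exists
    refine ⟨η, hηmem, fun hpd => ?_⟩
    have hdet := hpd.det_pos
    rw [MbetaS_eq, Matrix.det_fin_two_of] at hdet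
    have hFη' : aGL η * a1GL η - ((β * η + a2GL η / β) / 2) ^ 2 < 0 := hFη
    nlinarith [hdet, hFη']
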